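/- Fix real numbers b and g and a nonzero complex number c, and let K : ℝ × ℝ → ℂ be the simple-harmonic-oscillator propagator K(x,y) = c · exp(i (b(x² + y²) + g·x·y)) (for an oscillator of mass m and frequency ω evolving for a time T with sin(ωT) ≠ 0 one has b = −mω cot(ωT)/(2ħ), g = mω/(ħ sin(ωT))). Then K is continuous and nowhere zero, and for every ψ ∈ L²(ℝ) that is not almost everywhere zero, the ℂ-linear span of the set { χ_B · ψ_A : A ⊆ ℝ compact Lebesgue-measurable, B ⊆ ℝ bounded Lebesgue-measurable } is dense in L²(ℝ). -/

import Mathlib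

open MeasureTheory

section Aux
open Filter

/-- A locally integrable function on `ℝ` whose integral over every closed ball
vanishes is a.e. zero. -/
private lemma aux_ae_zero (f : ℝ → ℂ) (hf : LocallyIntegrable f volume)
    (h : ∀ x : ℝ, ∀ r : ℝ, 0 < r → ∫ y in Metric.closedBall x r, f y = 0) :
    f =ᵐ[volume] 0 := by
  filter_upwards [IsUnifLocDoublingMeasure.ae_tendsto_average volume hf 1] with x hx
  have hδ : Tendsto (fun n : ℕ => 1 / ((n : ℝ) + 1)) atTop (nhdsWithin 0 (Set.Ioi 0)) := by
    apply tendsto_nhdsWithin_of_tendsto_nhds_of_eventually_within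
    · exact tendsto_one_div_add_atTop_nhds_zero_nat
    · exact Eventually.of_forall fun n => Set.mem_Ioi.mpr (by positivity)
  have hmem : ∀ᶠ n : ℕ in atTop, x ∈ Metric.closedBall x (1 * (1 / ((n : ℝ) + 1))) :=
    Eventually.of_forall fun n => Metric.mem_closedBall_self (by positivity)
  have h2 := hx (fun _ : ℕ => x) (fun n => 1 / ((n : ℝ) + 1)) hδ hmem
  have h3 : (fun n : ℕ => ⨍ y in Metric.closedBall x (1 / ((n : ℝ) + 1)), f y) = fun _ => 0 := by
    funext n
    rw [setAverage_eq, h x _ (by positivity), smul_zero]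
  rw [h3] at h2
  exact (tendsto_nhds_unique tendsto_const_nhds h2).symm

private lemma aux_psiA_cont {K : ℝ × ℝ → ℂ} {C : ℝ} {ψ : ℝ → ℂ}
    (hKc : Continuous K) (hKn : ∀ p, ‖K p‖ = C)
    (hψ : MemLp ψ 2 volume) {A : Set ℝ} (hA : IsCompact A) :
    Continuous (fun x => ∫ y in A, K (x, y) * ψ y) := by
  have hψi : IntegrableOn ψ A volume :=
    (hψ.locallyIntegrable (by norm_num)).integrableOn_isCompact hA
  apply continuous_of_dominated
  · intro x
    exact ((hKc.comp (Continuous.prodMk_right x)).aestronglyMeasurable.mul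
      hψi.aestronglyMeasurable)
  · intro x
    refine Eventually.of_forall fun y => ?_
    rw [norm_mul, hKn]
  · exact hψi.norm.const_mul C
  · exact Eventually.of_forall fun y =>
      (hKc.comp (continuous_id.prodMk continuous_const)).mul continuous_const

private lemma aux_psiA_bdd {K : ℝ × ℝ → ℂ} {C : ℝ} {ψ : ℝ → ℂ}
    (hKn : ∀ p, ‖K p‖ = C) {A : Set ℝ} (x : ℝ) :
    ‖∫ y in A, K (x, y) * ψ y‖ ≤ ∫ y in A, C * ‖ψ y‖ := by
  refine (norm_integral_le_integral_norm _).trans ?_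
  refine le_of_eq (integral_congr_ae (Eventually.of_forall fun y => ?_))
  show ‖K (x, y) * ψ y‖ = C * ‖ψ y‖
  rw [norm_mul, hKn]

/-- A bounded a.e.-strongly-measurable function times a locally integrable
function is locally integrable. -/
private lemma aux_loc_int_mul {φ f : ℝ → ℂ} {M : ℝ}
    (hφm : AEStronglyMeasurable φ volume) (hφb : ∀ x, ‖φ x‖ ≤ M)
    (hf : LocallyIntegrable f volume) :
    LocallyIntegrable (fun x => φ x * f x) volume := by
  rw [locallyIntegrable_iff] at hf ⊢
  intro k hk
  exact (hf k hk).bdd_mul hφm.restrict (ae_of_all _ hφb)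

end Aux

/-- The set of `L²` classes of the functions `χ_B · ψ_A` (`A` compact
measurable, `B` bounded measurable), where `ψ_A x = ∫_A K (x, y) ψ y dy`. -/
def restrictedEvolutionSet (K : ℝ × ℝ → ℂ) (ψ : ℝ → ℂ) :
    Set (Lp ℂ 2 (volume : Measure ℝ)) :=
  {f | ∃ A B : Set ℝ,
    IsCompact A ∧ MeasurableSet A ∧ Bornology.IsBounded B ∧ MeasurableSet B ∧
    (f : ℝ → ℂ) =ᵐ[volume]
      fun x => Set.indicator B (fun _ => (1 : ℂ)) x * ∫ y in A, K (x, y) * ψ y}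

/-- The simple-harmonic-oscillator propagator
`K(x,y) = c · exp(i (b (x² + y²) + g x y))` (with `c ≠ 0`) is continuous and
nowhere zero, and for every initial state `ψ ∈ L²(ℝ)` that is not almost
everywhere zero, the `ℂ`-span of the vectors `χ_B · ψ_A` (`A` compact
measurable, `B` bounded measurable) is dense in `L²(ℝ)`. -/
theorem stmt_16 (b g : ℝ) (c : ℂ) (hc : c ≠ 0)
    (K : ℝ × ℝ → ℂ)
    (hK : K = fun p => c * Complex.exp
      (Complex.I * ((b : ℂ) * ((p.1 : ℂ) ^ 2 + (p.2 : ℂ) ^ 2)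
        + (g : ℂ) * (p.1 : ℂ) * (p.2 : ℂ)))) :
    Continuous K ∧ (∀ p, K p ≠ 0) ∧
    ∀ ψ : ℝ → ℂ, MemLp ψ 2 volume → ¬ (ψ =ᵐ[(volume : Measure ℝ)] 0) →
      Dense (Submodule.span ℂ (restrictedEvolutionSet K ψ) :
        Set (Lp ℂ 2 (volume : Measure ℝ))) := by
  have hKc : Continuous K := by
    subst hK; fun_prop
  have hKn : ∀ p, ‖K p‖ = ‖c‖ := by
    intro p
    subst hK
    simp only [norm_mul]
    have hcast : ((b : ℂ) * ((p.1 : ℂ) ^ 2 + (p.2 : ℂ) ^ 2)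
        + (g : ℂ) * (p.1 : ℂ) * (p.2 : ℂ))
        = ((b * (p.1 ^ 2 + p.2 ^ 2) + g * p.1 * p.2 : ℝ) : ℂ) := by
      push_cast; ring
    have h0 : (Complex.I * ((b : ℂ) * ((p.1 : ℂ) ^ 2 + (p.2 : ℂ) ^ 2)
        + (g : ℂ) * (p.1 : ℂ) * (p.2 : ℂ))).re = 0 := by
      rw [hcast, Complex.mul_re, Complex.I_re, Complex.I_im, Complex.ofReal_im,
        Complex.ofReal_re]
      ring
    rw [Complex.norm_exp, h0, Real.exp_zero, mul_one]
  have hK0 : ∀ p, K p ≠ 0 := by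
    intro p; subst hK
    exact mul_ne_zero hc (Complex.exp_ne_zero _)
  refine ⟨hKc, hK0, ?_⟩
  intro ψ hψ hψ0
  rw [Submodule.dense_iff_topologicalClosure_eq_top,
    Submodule.topologicalClosure_eq_top_iff]
  rw [Submodule.eq_bot_iff]
  intro h hmem
  by_contra hne
  -- notation
  set h' : ℝ → ℂ := (h : ℝ → ℂ) with hh'
  have hh'm : StronglyMeasurable h' := Lp.stronglyMeasurable h
  have hh'loc : LocallyIntegrable h' volume :=
    (Lp.memLp h).locallyIntegrable (by norm_num)
  -- the orthogonality relations
  have horth : ∀ A B : Set ℝ, IsCompact A → MeasurableSet A →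
      Bornology.IsBounded B → MeasurableSet B →
      ∫ x in B, (starRingEnd ℂ) (∫ y in A, K (x, y) * ψ y) * h' x = 0 := by
    intro A B hA hAm hB hBm
    set ψA : ℝ → ℂ := fun x => ∫ y in A, K (x, y) * ψ y with hψA
    set M : ℝ := ∫ y in A, ‖c‖ * ‖ψ y‖ with hM
    have hψAc : Continuous ψA := aux_psiA_cont hKc hKn hψ hA
    have hψAb : ∀ x, ‖ψA x‖ ≤ M := fun x => aux_psiA_bdd hKn x
    set F : ℝ → ℂ := fun x => Set.indicator B (fun _ => (1 : ℂ)) x * ψA x with hF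
    have hFeq : F = Set.indicator B ψA := by
      funext x
      by_cases hx : x ∈ B <;>
        simp [hF, Set.indicator_of_mem, Set.indicator_of_notMem, hx]
    have hFmem : MemLp F 2 volume := by
      rw [hFeq, memLp_indicator_iff_restrict hBm]
      haveI : IsFiniteMeasure (volume.restrict B) :=
        ⟨by rw [Measure.restrict_apply_univ]; exact hB.measure_lt_top⟩
      exact MemLp.of_bound hψAc.aestronglyMeasurable.restrict M
        (Filter.Eventually.of_forall hψAb)
    set u : Lp ℂ 2 (volume : Measure ℝ) := hFmem.toLp F with hu
    have huS : u ∈ restrictedEvolutionSet K ψ :=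
      ⟨A, B, hA, hAm, hB, hBm, hFmem.coeFn_toLp⟩
    have hinner : (inner ℂ u h : ℂ) = 0 :=
      (Submodule.mem_orthogonal _ h).mp hmem u (Submodule.subset_span huS)
    rw [MeasureTheory.L2.inner_def] at hinner
    have hinner2 : ∫ x, (starRingEnd ℂ) (F x) * h' x = 0 := by
      rw [← hinner]
      refine integral_congr_ae ?_
      filter_upwards [hFmem.coeFn_toLp] with x hx
      rw [RCLike.inner_apply, hx, mul_comm]
    rw [← hinner2, ← integral_indicator hBm]
    refine integral_congr_ae (Filter.Eventually.of_forall fun x => ?_)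
    by_cases hx : x ∈ B <;>
      simp [hF, hψA, Set.indicator_of_mem, Set.indicator_of_notMem, hx]
  -- consequence: for each compact A, conj ψA * h' = 0 a.e.
  have hkey : ∀ A : Set ℝ, IsCompact A → MeasurableSet A →
      (fun x => (starRingEnd ℂ) (∫ y in A, K (x, y) * ψ y) * h' x) =ᵐ[volume] 0 := by
    intro A hA hAm
    refine aux_ae_zero _ ?_ ?_
    · exact aux_loc_int_mul
        (Complex.continuous_conj.comp (aux_psiA_cont hKc hKn hψ hA)).aestronglyMeasurable
        (fun x => by
          rw [RCLike.norm_conj]; exact aux_psiA_bdd hKn x)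
        hh'loc
    · intro x r hr
      exact horth A (Metric.closedBall x r) hA hAm Metric.isBounded_closedBall
        measurableSet_closedBall
  -- the set where h' does not vanish
  set N : Set ℝ := {x | h' x ≠ 0} with hN
  have hNm : MeasurableSet N := (hh'm.measurable (MeasurableSet.singleton 0)).compl
  have hNpos : volume N ≠ 0 := by
    intro h0
    exact hne ((Lp.eq_zero_iff_ae_eq_zero).mpr (ae_iff.mpr h0))
  have hloc0 : ¬ ∀ x ∈ N, ∃ u ∈ nhdsWithin x N, volume u = 0 :=
    fun H => hNpos (measure_null_of_locally_null N H)
  push_neg at hloc0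
  obtain ⟨x₀, hx₀N, hx₀⟩ := hloc0
  -- every restricted evolution vanishes at x₀
  have hψA0 : ∀ A : Set ℝ, IsCompact A → MeasurableSet A →
      (∫ y in A, K (x₀, y) * ψ y) = 0 := by
    intro A hA hAm
    by_contra hA0
    have hcont : Continuous (fun x => ∫ y in A, K (x, y) * ψ y) :=
      aux_psiA_cont hKc hKn hψ hA
    have hopen : IsOpen {x : ℝ | (∫ y in A, K (x, y) * ψ y) ≠ 0} :=
      isOpen_compl_singleton.preimage hcont
    obtain ⟨ε, hε, hball⟩ := Metric.isOpen_iff.mp hopen x₀ hA0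
    have hu : N ∩ Metric.ball x₀ ε ∈ nhdsWithin x₀ N :=
      Filter.inter_mem self_mem_nhdsWithin
        (mem_nhdsWithin_of_mem_nhds (Metric.ball_mem_nhds _ hε))
    refine hx₀ _ hu ?_
    have hnull : volume {x : ℝ |
        (starRingEnd ℂ) (∫ y in A, K (x, y) * ψ y) * h' x ≠ 0} = 0 := by
      have h1 := hkey A hA hAm
      rw [Filter.EventuallyEq, ae_iff] at h1
      simpa using h1
    refine measure_mono_null ?_ hnull
    rintro x ⟨hxN, hxB⟩
    exact mul_ne_zero (by simpa [map_eq_zero] using hball hxB) hxN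
  -- hence K (x₀, ·) * ψ is a.e. zero, so ψ is a.e. zero
  have hloc : LocallyIntegrable (fun y => K (x₀, y) * ψ y) volume :=
    aux_loc_int_mul (hKc.comp (Continuous.prodMk_right x₀)).aestronglyMeasurable
      (fun y => le_of_eq (hKn _)) (hψ.locallyIntegrable (by norm_num))
  have hae := aux_ae_zero _ hloc (fun x r hr =>
    hψA0 _ (isCompact_closedBall x r) measurableSet_closedBall)
  apply hψ0
  filter_upwards [hae] with y hy
  exact (mul_eq_zero.mp hy).resolve_left (hK0 _)
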